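/- Let n ≥ 1 and let i ∈ {1,…,n}. For every integer j ≥ 0 and every μ ∈ ℤ^{n+1}, the unrestricted one-dimensional sum of the level-1 perfect crystal of type A_n^{(1)} satisfies the two-term Weyl-reflection identity g_j(i−1, μ) + g_j(i, μ + e_{i−1} − e_i) = g_j(i−1, s_i·μ − e_{i−1} + e_i) + g_j(i, s_i·μ), where s_i·μ denotes the vector obtained from μ by interchanging the entries μ_{i−1} and μ_i. (This is the case m = 1 of the Weyl-reflection identity, for a classical index i and the element b = i−1 with φ_i(b) = 1, f_i(b) = i.) -/

import Mathlib

open Finset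

noncomputable section

/-- The indeterminate `q`, living in the field of rational functions `ℚ(q)`. -/
def q : RatFunc ℚ := RatFunc.X

/-- Energy function of the level-1 perfect crystal `B = {0,…,n}` of type `A_n^{(1)}`. -/
def H (n : ℕ) (b b' : Fin (n + 1)) : ℤ := if b' ≤ b then 1 else 0

/-- The unrestricted one-dimensional sum `g_j(b,μ)`. -/
def g (n j : ℕ) (b : Fin (n + 1)) (μ : Fin (n + 1) → ℤ) : RatFunc ℚ :=
  ∑ p ∈ Finset.univ.filter (fun p : Fin (j + 1) → Fin (n + 1) =>
      p (Fin.last j) = b ∧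
      ∀ k, ((Finset.univ.filter (fun i : Fin j => p i.castSucc = k)).card : ℤ) = μ k),
    q ^ (∑ i : Fin j, ((i : ℤ) + 1) * H n (p i.succ) (p i.castSucc))

/-- The standard basis vector `e_b` of `ℤ^{n+1}`. -/
def e (n : ℕ) (b : Fin (n + 1)) : Fin (n + 1) → ℤ := fun k => if k = b then 1 else 0
/-! ### Auxiliary development -/

lemma q_ne_zero : q ≠ 0 := RatFunc.X_ne_zero

/-- content of a word -/
def cnt (n j : ℕ) (w : Fin j → Fin (n + 1)) : Fin (n + 1) → ℤ :=
  fun k => ((Finset.univ.filter fun i => w i = k).card : ℤ)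

/-- energy of a path (length j+1) -/
def En (n j : ℕ) (p : Fin (j + 1) → Fin (n + 1)) : ℤ :=
  ∑ i : Fin j, ((i : ℤ) + 1) * H n (p i.succ) (p i.castSucc)

/-- reformulated one-dimensional sum -/
def G (n j : ℕ) (b : Fin (n + 1)) (μ : Fin (n + 1) → ℤ) : RatFunc ℚ :=
  ∑ w : Fin j → Fin (n + 1), if cnt n j w = μ then q ^ En n j (Fin.snoc w b) else 0

def snocE (X : Type*) (j : ℕ) : (X × (Fin j → X)) ≃ (Fin (j + 1) → X) where
  toFun p := Fin.snoc p.2 p.1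
  invFun p := (p (Fin.last j), Fin.init p)
  left_inv := by rintro ⟨k, v⟩; simp [Fin.init_snoc]
  right_inv := fun p => Fin.snoc_init_self p

lemma g_eq_G (n j : ℕ) (b : Fin (n + 1)) (μ : Fin (n + 1) → ℤ) :
    g n j b μ = G n j b μ := by
  unfold g G
  rw [Finset.sum_filter]
  rw [← Fintype.sum_equiv (snocE (Fin (n+1)) j) _
      (fun p => if (p (Fin.last j) = b ∧ ∀ k,
          ((Finset.univ.filter (fun i : Fin j => p i.castSucc = k)).card : ℤ) = μ k)
        then q ^ (∑ i : Fin j, ((i : ℤ) + 1) * H n (p i.succ) (p i.castSucc)) else 0)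
      (fun _ => rfl)]
  rw [Fintype.sum_prod_type]
  rw [Finset.sum_comm]
  refine Finset.sum_congr rfl fun w _ => ?_
  have : ∀ k : Fin (n+1),
      (if ((Fin.snoc w k : Fin (j+1) → Fin (n+1)) (Fin.last j) = b ∧ ∀ m,
          ((Finset.univ.filter (fun i : Fin j => (Fin.snoc w k : Fin (j+1) → Fin (n+1)) i.castSucc = m)).card : ℤ) = μ m)
        then q ^ (∑ i : Fin j, ((i : ℤ) + 1) * H n ((Fin.snoc w k : Fin (j+1) → Fin (n+1)) i.succ) ((Fin.snoc w k : Fin (j+1) → Fin (n+1)) i.castSucc)) else 0)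
      = if k = b then (if cnt n j w = μ then q ^ En n j (Fin.snoc w b) else 0) else 0 := by
    intro k
    by_cases hk : k = b
    · subst hk
      simp only [Fin.snoc_last, Fin.snoc_castSucc, if_pos rfl, true_and]
      have hcond : (∀ m, ((Finset.univ.filter (fun i : Fin j => w i = m)).card : ℤ) = μ m)
          ↔ cnt n j w = μ := by
        rw [funext_iff]; rfl
      simp only [hcond, if_true, En, Fin.snoc_castSucc]
    · simp only [Fin.snoc_last, hk, false_and, if_false]
  simp only [snocE, Equiv.coe_fn_mk]
  refine (Finset.sum_congr rfl (fun k _ => this k)).trans ?_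
  rw [Finset.sum_ite_eq' Finset.univ b]
  simp

lemma cnt_snoc (n j : ℕ) (v : Fin j → Fin (n + 1)) (k : Fin (n + 1)) :
    cnt n (j + 1) (Fin.snoc v k) = cnt n j v + e n k := by
  funext m
  have h : (Finset.univ.filter fun i : Fin (j+1) => (Fin.snoc v k : Fin (j+1) → Fin (n+1)) i = m).card
      = (Finset.univ.filter fun i : Fin j => v i = m).card + (if k = m then 1 else 0) := by
    rw [Finset.card_filter, Finset.card_filter, Fin.sum_univ_castSucc]
    simp [Fin.snoc_castSucc, Fin.snoc_last]
  simp only [cnt, Pi.add_apply, e, h]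
  push_cast
  by_cases hk : k = m
  · simp [hk]
  · have hk' : ¬ m = k := fun hmk => hk hmk.symm
    simp [hk, hk']

lemma En_snoc (n j : ℕ) (c : Fin (n + 1)) (u : Fin (j + 1) → Fin (n + 1)) :
    En n (j + 1) (Fin.snoc u c) = En n j u + ((j : ℤ) + 1) * H n c (u (Fin.last j)) := by
  simp only [En]
  rw [Fin.sum_univ_castSucc]
  congr 1
  · refine Finset.sum_congr rfl fun i _ => ?_
    rw [Fin.succ_castSucc]
    rw [Fin.snoc_castSucc, Fin.snoc_castSucc]
    simp
  · rw [Fin.succ_last, Fin.snoc_last, Fin.snoc_castSucc]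
    simp

lemma G_succ (n j : ℕ) (c : Fin (n + 1)) (μ : Fin (n + 1) → ℤ) :
    G n (j + 1) c μ =
      ∑ k : Fin (n + 1), q ^ (((j : ℤ) + 1) * H n c k) * G n j k (μ - e n k) := by
  unfold G
  rw [← Fintype.sum_equiv (snocE (Fin (n+1)) j) _
      (fun w => if cnt n (j+1) w = μ then q ^ En n (j+1) (Fin.snoc w c) else 0)
      (fun _ => rfl)]
  rw [Fintype.sum_prod_type]
  refine Finset.sum_congr rfl fun k _ => ?_
  rw [Finset.mul_sum]
  refine Finset.sum_congr rfl fun v _ => ?_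
  simp only [snocE, Equiv.coe_fn_mk]
  have hcond : (cnt n (j+1) (Fin.snoc v k) = μ) ↔ (cnt n j v = μ - e n k) := by
    rw [cnt_snoc, ← eq_sub_iff_add_eq]
  have hEn : En n (j+1) (Fin.snoc (Fin.snoc v k : Fin (j+1) → Fin (n+1)) c)
      = En n j (Fin.snoc v k) + ((j : ℤ) + 1) * H n c k := by
    rw [En_snoc, Fin.snoc_last]
  rw [hEn]
  by_cases h : cnt n j v = μ - e n k
  · refine (if_pos (hcond.mpr h)).trans ?_
    rw [if_pos h, zpow_add₀ q_ne_zero, mul_comm]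
  · refine (if_neg (fun hc => h (hcond.mp hc))).trans ?_
    rw [if_neg h, mul_zero]

lemma G_zero (n : ℕ) (c : Fin (n + 1)) (μ : Fin (n + 1) → ℤ) :
    G n 0 c μ = if μ = 0 then 1 else 0 := by
  unfold G
  have hw : ∀ w : Fin 0 → Fin (n+1),
      (if cnt n 0 w = μ then q ^ En n 0 (Fin.snoc w c) else 0) = (if μ = 0 then 1 else 0) := by
    intro w
    have h1 : cnt n 0 w = 0 := by funext m; simp [cnt]
    have h2 : En n 0 (Fin.snoc w c) = 0 := by simp [En]
    simp only [h1, h2, zpow_zero]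
    by_cases h : μ = 0
    · rw [if_pos h.symm, if_pos h]
    · rw [if_neg (fun hc => h hc.symm), if_neg h]
  rw [Finset.sum_congr rfl (fun w _ => hw w), Finset.sum_const, Finset.card_univ]
  simp

/-- the action of the simple reflection on contents -/
def sw (n : ℕ) (a b : Fin (n + 1)) (μ : Fin (n + 1) → ℤ) : Fin (n + 1) → ℤ :=
  fun k => μ (Equiv.swap a b k)

lemma sw_sw (n : ℕ) (a b : Fin (n + 1)) (μ : Fin (n + 1) → ℤ) :
    sw n a b (sw n a b μ) = μ := by
  funext k; simp [sw, Equiv.swap_apply_self]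

lemma sw_zero (n : ℕ) (a b : Fin (n + 1)) : sw n a b 0 = 0 := rfl

lemma sw_add (n : ℕ) (a b : Fin (n + 1)) (μ ν : Fin (n + 1) → ℤ) :
    sw n a b (μ + ν) = sw n a b μ + sw n a b ν := rfl

lemma sw_sub (n : ℕ) (a b : Fin (n + 1)) (μ ν : Fin (n + 1) → ℤ) :
    sw n a b (μ - ν) = sw n a b μ - sw n a b ν := rfl

lemma sw_e (n : ℕ) (a b k : Fin (n + 1)) :
    sw n a b (e n k) = e n (Equiv.swap a b k) := by
  funext m
  simp only [sw, e]
  by_cases h : Equiv.swap a b m = k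
  · rw [if_pos h, if_pos (by rw [← h, Equiv.swap_apply_self])]
  · rw [if_neg h, if_neg (fun hc => h (by rw [hc, Equiv.swap_apply_self]))]

lemma sw_eq_zero_iff (n : ℕ) (a b : Fin (n + 1)) (μ : Fin (n + 1) → ℤ) :
    sw n a b μ = 0 ↔ μ = 0 := by
  constructor
  · intro h
    have := congrArg (sw n a b) h
    rwa [sw_sw, sw_zero] at this
  · intro h; rw [h, sw_zero]

lemma key (n : ℕ) (a b : Fin (n + 1)) (hab : (b : ℕ) = (a : ℕ) + 1) (j : ℕ) :
    (∀ c, c ≠ a → ∀ μ, G n j c μ = G n j c (sw n a b μ)) ∧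
    (∀ μ, G n j a μ + G n j b (μ + e n a - e n b) =
      G n j a (sw n a b μ - e n a + e n b) + G n j b (sw n a b μ)) := by
  have hne : a ≠ b := by
    intro h; rw [h] at hab; omega
  have hba : b ≠ a := fun h => hne h.symm
  have Hc : ∀ c : Fin (n+1), c ≠ a → H n c a = H n c b := by
    intro c hc
    have hc' : (c : ℕ) ≠ (a : ℕ) := fun h => hc (Fin.ext h)
    simp only [H, Fin.le_def, hab]
    split_ifs with h1 h2 <;> omega
  have Hk : ∀ k : Fin (n+1), k ≠ b → H n a k = H n b k := by
    intro k hk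
    have hk' : (k : ℕ) ≠ (b : ℕ) := fun h => hk (Fin.ext h)
    simp only [H, Fin.le_def, hab] at hk' ⊢
    split_ifs with h1 h2 <;> omega
  have Haa : H n a a = 1 := by simp [H]
  have Hab0 : H n a b = 0 := by
    simp only [H, Fin.le_def, hab]
    rw [if_neg (by omega)]
  have Hba : H n b a = 1 := by
    simp only [H, Fin.le_def, hab]
    rw [if_pos (by omega)]
  have Hbb : H n b b = 1 := by simp [H]
  have hsplit : ∀ F : Fin (n+1) → RatFunc ℚ, ∑ k, F k
      = F a + (F b + ∑ k ∈ (Finset.univ.erase a).erase b, F k) := by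
    intro F
    rw [← Finset.add_sum_erase _ _ (Finset.mem_univ a),
        ← Finset.add_sum_erase _ _ (Finset.mem_erase.mpr ⟨hba, Finset.mem_univ b⟩)]
  have hmem : ∀ k : Fin (n+1), k ∈ (Finset.univ.erase a).erase b → k ≠ b ∧ k ≠ a := by
    intro k hk
    rcases Finset.mem_erase.mp hk with ⟨h1, h2⟩
    rcases Finset.mem_erase.mp h2 with ⟨h3, -⟩
    exact ⟨h1, h3⟩
  induction j with
  | zero =>
      constructor
      · intro c _ μ
        rw [G_zero, G_zero]
        by_cases h : μ = 0
        · rw [if_pos h, if_pos ((sw_eq_zero_iff n a b μ).mpr h)]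
        · rw [if_neg h, if_neg (fun hc2 => h ((sw_eq_zero_iff n a b μ).mp hc2))]
      · intro μ
        rw [G_zero, G_zero, G_zero, G_zero]
        by_cases h1 : μ = 0
        · have h2 : ¬ (μ + e n a - e n b = 0) := by
            rw [h1]; intro hcon
            have := congrFun hcon a
            simp [e, hne] at this
          have h3 : sw n a b μ = 0 := by rw [h1, sw_zero]
          have h4 : ¬ (sw n a b μ - e n a + e n b = 0) := by
            rw [h3]; intro hcon
            have := congrFun hcon a
            simp [e, hne] at this
          rw [if_pos h1, if_neg h2, if_neg h4, if_pos h3]; ring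
        · by_cases h2 : μ + e n a - e n b = 0
          · have hμ : μ = e n b - e n a := by
              have h5 : μ - (e n b - e n a) = 0 := by rw [← h2]; abel
              exact sub_eq_zero.mp h5
            have h3 : sw n a b μ = e n a - e n b := by
              rw [hμ, sw_sub, sw_e, sw_e, Equiv.swap_apply_left, Equiv.swap_apply_right]
            have h4 : sw n a b μ - e n a + e n b = 0 := by rw [h3]; abel
            have h5 : ¬ (sw n a b μ = 0) := fun hc => h1 ((sw_eq_zero_iff n a b μ).mp hc)
            rw [if_neg h1, if_pos h2, if_pos h4, if_neg h5]; ring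
          · have h3 : ¬ (sw n a b μ = 0) := fun hc => h1 ((sw_eq_zero_iff n a b μ).mp hc)
            have h4 : ¬ (sw n a b μ - e n a + e n b = 0) := by
              intro hc
              apply h2
              have h5 := congrArg (sw n a b) hc
              rw [sw_add, sw_sub, sw_sw, sw_e, sw_e, Equiv.swap_apply_left,
                Equiv.swap_apply_right, sw_zero] at h5
              rw [show μ + e n a - e n b = μ - e n b + e n a from by abel]
              exact h5
            rw [if_neg h1, if_neg h2, if_neg h4, if_neg h3]
  | succ j ih =>
      obtain ⟨ih1, ih2⟩ := ih
      constructor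
      · intro c hc μ
        rw [G_succ, G_succ, hsplit, hsplit]
        have hres : ∑ k ∈ (Finset.univ.erase a).erase b,
              q ^ (((j:ℤ)+1) * H n c k) * G n j k (μ - e n k)
            = ∑ k ∈ (Finset.univ.erase a).erase b,
              q ^ (((j:ℤ)+1) * H n c k) * G n j k (sw n a b μ - e n k) := by
          refine Finset.sum_congr rfl fun k hk => ?_
          obtain ⟨hkb, hka⟩ := hmem k hk
          rw [ih1 k hka (μ - e n k), sw_sub, sw_e, Equiv.swap_apply_of_ne_of_ne hka hkb]
        rw [hres]
        rw [show H n c b = H n c a from (Hc c hc).symm]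
        have h2 := ih2 (μ - e n a)
        rw [show μ - e n a + e n a - e n b = μ - e n b from by abel] at h2
        rw [sw_sub, sw_e, Equiv.swap_apply_left] at h2
        rw [show sw n a b μ - e n b - e n a + e n b = sw n a b μ - e n a from by abel] at h2
        linear_combination (q ^ (((j:ℤ)+1) * H n c a)) * h2
      · intro μ
        rw [G_succ, G_succ, G_succ, G_succ, hsplit, hsplit, hsplit, hsplit]
        simp only [Haa, Hab0, Hba, Hbb, mul_one, mul_zero, zpow_zero, one_mul]
        have hres : (∑ k ∈ (Finset.univ.erase a).erase b,
              q ^ (((j:ℤ)+1) * H n a k) * G n j k (μ - e n k)) +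
            (∑ k ∈ (Finset.univ.erase a).erase b,
              q ^ (((j:ℤ)+1) * H n b k) * G n j k (μ + e n a - e n b - e n k)) =
            (∑ k ∈ (Finset.univ.erase a).erase b,
              q ^ (((j:ℤ)+1) * H n a k) * G n j k (sw n a b μ - e n a + e n b - e n k)) +
            (∑ k ∈ (Finset.univ.erase a).erase b,
              q ^ (((j:ℤ)+1) * H n b k) * G n j k (sw n a b μ - e n k)) := by
          rw [← Finset.sum_add_distrib, ← Finset.sum_add_distrib]
          refine Finset.sum_congr rfl fun k hk => ?_
          obtain ⟨hkb, hka⟩ := hmem k hk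
          have hk1 := ih1 k hka (μ - e n k)
          rw [sw_sub, sw_e, Equiv.swap_apply_of_ne_of_ne hka hkb] at hk1
          have hk2 := ih1 k hka (μ + e n a - e n b - e n k)
          rw [sw_sub, sw_sub, sw_add, sw_e, sw_e, sw_e, Equiv.swap_apply_left,
            Equiv.swap_apply_right, Equiv.swap_apply_of_ne_of_ne hka hkb] at hk2
          rw [show sw n a b μ + e n b - e n a - e n k
              = sw n a b μ - e n a + e n b - e n k from by abel] at hk2
          rw [show H n b k = H n a k from (Hk k hkb).symm, hk1, hk2]
          ring
        rw [show μ + e n a - e n b - e n a = μ - e n b from by abel]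
        rw [show sw n a b μ - e n a + e n b - e n a
            = sw n a b μ - e n a - e n a + e n b from by abel]
        rw [show sw n a b μ - e n a + e n b - e n b = sw n a b μ - e n a from by abel]
        have h1 := ih2 (μ - e n b)
        rw [sw_sub, sw_e, Equiv.swap_apply_right] at h1
        rw [show μ - e n b + e n a - e n b = μ + e n a - e n b - e n b from by abel] at h1
        have h2 := ih2 (μ - e n a)
        rw [sw_sub, sw_e, Equiv.swap_apply_left] at h2
        rw [show μ - e n a + e n a - e n b = μ - e n b from by abel] at h2
        rw [show sw n a b μ - e n b - e n a + e n b = sw n a b μ - e n a from by abel] at h2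
        have h3 := ih1 b hba (μ - e n b)
        rw [sw_sub, sw_e, Equiv.swap_apply_right] at h3
        linear_combination hres + (q ^ ((j:ℤ)+1)) * h1 + (q ^ ((j:ℤ)+1)) * h2
          + (1 - q ^ ((j:ℤ)+1)) * h3


/-- the `m = 1` case of the Weyl-reflection identity for a classical index
`i ∈ {1,…,n}` and the element `b = i-1` (with `φ_i(b) = 1`, `f_i(b) = i`):
`g_j(i-1,μ) + g_j(i, μ+e_{i-1}-e_i) = g_j(i-1, s_i·μ-e_{i-1}+e_i) + g_j(i, s_i·μ)`,
where `s_i` interchanges the entries `μ_{i-1}` and `μ_i`. -/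
theorem statement8 (n : ℕ) (hn : 1 ≤ n) (i : ℕ) (hi1 : 1 ≤ i) (hin : i ≤ n)
    (j : ℕ) (μ : Fin (n + 1) → ℤ) :
    g n j ⟨i - 1, by omega⟩ μ +
      g n j ⟨i, by omega⟩ (μ + e n ⟨i - 1, by omega⟩ - e n ⟨i, by omega⟩) =
    g n j ⟨i - 1, by omega⟩
      ((fun k : Fin (n + 1) => if (k : ℕ) = i - 1 then μ ⟨i, by omega⟩
        else if (k : ℕ) = i then μ ⟨i - 1, by omega⟩ else μ k)
        - e n ⟨i - 1, by omega⟩ + e n ⟨i, by omega⟩) +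
    g n j ⟨i, by omega⟩
      (fun k : Fin (n + 1) => if (k : ℕ) = i - 1 then μ ⟨i, by omega⟩
        else if (k : ℕ) = i then μ ⟨i - 1, by omega⟩ else μ k) := by
  have ha : i - 1 < n + 1 := by omega
  have hb : i < n + 1 := by omega
  set a : Fin (n + 1) := ⟨i - 1, ha⟩ with ha'
  set b : Fin (n + 1) := ⟨i, hb⟩ with hb'
  have hab : (b : ℕ) = (a : ℕ) + 1 := by
    simp only [ha', hb']; omega
  have hne : a ≠ b := by
    intro h
    rw [h] at hab; omega
  have hswf : (fun k : Fin (n + 1) => if (k : ℕ) = i - 1 then μ ⟨i, hb⟩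
      else if (k : ℕ) = i then μ ⟨i - 1, ha⟩ else μ k) = sw n a b μ := by
    funext k
    by_cases h1 : (k : ℕ) = i - 1
    · have hk : k = a := Fin.ext h1
      rw [hk]
      simp only [sw, Equiv.swap_apply_left]
      simp [ha', hb']
    · by_cases h2 : (k : ℕ) = i
      · have hk : k = b := Fin.ext h2
        rw [hk]
        simp only [sw, Equiv.swap_apply_right]
        have hne2 : ¬ (i = i - 1) := by omega
        simp [hne2, ha', hb']
      · have hka : k ≠ a := fun h => h1 (by rw [h])
        have hkb : k ≠ b := fun h => h2 (by rw [h])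
        simp only [sw, Equiv.swap_apply_of_ne_of_ne hka hkb]
        simp [h1, h2]
  rw [g_eq_G, g_eq_G, g_eq_G, g_eq_G, hswf]
  exact (key n a b hab j).2 μ

end
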